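/- Let b ≥ 1 and m ≥ 2, set n := b·m, and for each k ∈ {1,…,b} let w_{k,1},…,w_{k,m} be vectors in ℝ^d with ‖w_{k,i}‖ = 1 for all i and ⟨w_{k,i}, w_{k,j}⟩ = −1/(m−1) for all i ≠ j (each block forms an (m−1)-simplex equiangular tight frame). Define the second moment M₂ := (1/(n(n−1))) ∑_{(k,i) ≠ (l,j)} ⟨w_{k,i}, w_{l,j}⟩². Then M₂ ≤ (n−m+1)/((m−1)(n−1)), and consequently the variance of the pairwise similarities satisfies M₂ − (1/(n−1))² ≤ n(n−m)/((m−1)(n−1)²). -/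

import Mathlib

open scoped RealInnerProductSpace
open Finset

lemma frame_bound {d m : ℕ} (hm : 2 ≤ m) (v : Fin m → EuclideanSpace ℝ (Fin d))
    (hv : ∀ i, ‖v i‖ = 1)
    (hip : ∀ i j, i ≠ j → ⟪v i, v j⟫ = -1 / ((m : ℝ) - 1))
    (x : EuclideanSpace ℝ (Fin d)) (hx : ‖x‖ = 1) :
    ∑ j, ⟪x, v j⟫ ^ 2 ≤ (m : ℝ) / ((m : ℝ) - 1) := by
  have hm1 : (0:ℝ) < (m:ℝ) - 1 := by
    have : (2:ℝ) ≤ m := by exact_mod_cast hm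
    linarith
  set c : Fin m → ℝ := fun j => ⟪x, v j⟫ with hc
  set S : ℝ := ∑ j, c j ^ 2 with hS
  set T : ℝ := ∑ j, c j with hT
  set y : EuclideanSpace ℝ (Fin d) := ∑ j, c j • v j with hy
  have hxy : ⟪x, y⟫ = S := by
    rw [hy, inner_sum]
    simp only [real_inner_smul_right]
    simp [hS, hc, sq]
  have hG : ∀ j j' : Fin m, ⟪v j, v j'⟫ =
      (if j = j' then (m : ℝ) / ((m:ℝ)-1) else 0) - 1 / ((m:ℝ)-1) := by
    intro j j'
    by_cases h : j = j'
    · subst h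
      rw [if_pos rfl]
      have : ⟪v j, v j⟫ = 1 := by
        rw [real_inner_self_eq_norm_sq, hv j]; norm_num
      rw [this, div_sub_div_same, div_self hm1.ne']
    · rw [hip j j' h, if_neg h]; ring
  have hyy : ⟪y, y⟫ = (m : ℝ) / ((m:ℝ)-1) * S - T ^ 2 / ((m:ℝ)-1) := by
    have expand : ⟪y, y⟫ = ∑ j, ∑ j', c j * c j' * ⟪v j, v j'⟫ := by
      rw [hy, sum_inner]
      refine Finset.sum_congr rfl fun j _ => ?_
      rw [real_inner_smul_left, inner_sum, Finset.mul_sum]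
      refine Finset.sum_congr rfl fun j' _ => ?_
      rw [real_inner_smul_right]; ring
    rw [expand]
    have hsplit : ∀ j j' : Fin m, c j * c j' * ⟪v j, v j'⟫ =
        (if j = j' then c j * c j' * ((m:ℝ)/((m:ℝ)-1)) else 0)
          - c j * c j' * (1/((m:ℝ)-1)) := by
      intro j j'
      rw [hG]
      by_cases h : j = j'
      · simp only [if_pos h]; ring
      · simp only [if_neg h]; ring
    simp_rw [hsplit, Finset.sum_sub_distrib, Finset.sum_ite_eq, Finset.mem_univ,
      if_true]
    have h1 : ∑ j, c j * c j * ((m:ℝ)/((m:ℝ)-1)) = (m:ℝ)/((m:ℝ)-1) * S := by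
      rw [hS]; simp_rw [sq]; rw [← Finset.sum_mul]; ring
    have h2 : ∑ j : Fin m, ∑ j' : Fin m, c j * c j' * (1/((m:ℝ)-1))
        = T ^ 2 / ((m:ℝ)-1) := by
      simp_rw [mul_assoc, ← Finset.mul_sum, ← Finset.sum_mul, ← hT]
      ring
    rw [h1, h2]
  have hCS : S * S ≤ ⟪y, y⟫ := by
    have h1 := real_inner_mul_inner_self_le x y
    have hxx : ⟪x, x⟫ = 1 := by
      rw [real_inner_self_eq_norm_sq, hx]; norm_num
    rw [hxy, hxx, one_mul] at h1
    exact h1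
  have hSnn : 0 ≤ S := Finset.sum_nonneg fun j _ => sq_nonneg _
  have hyyle : ⟪y, y⟫ ≤ (m : ℝ) / ((m:ℝ)-1) * S := by
    rw [hyy]
    have : 0 ≤ T ^ 2 / ((m:ℝ)-1) := div_nonneg (sq_nonneg _) hm1.le
    linarith
  have key : S * S ≤ (m : ℝ) / ((m:ℝ)-1) * S := le_trans hCS hyyle
  have hmpos : 0 < (m : ℝ) / ((m:ℝ)-1) := by positivity
  have : S ≤ (m : ℝ) / ((m:ℝ)-1) := by nlinarith
  calc ∑ j, ⟪x, v j⟫ ^ 2 = S := rfl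
    _ ≤ _ := this

theorem stmt_18 {d b m : ℕ} (hb : 1 ≤ b) (hm : 2 ≤ m)
    (w : Fin b → Fin m → EuclideanSpace ℝ (Fin d))
    (hw : ∀ k i, ‖w k i‖ = 1)
    (hetf : ∀ k, ∀ i j, i ≠ j → ⟪w k i, w k j⟫ = -1 / ((m : ℝ) - 1)) :
    (1 / (((b * m : ℕ) : ℝ) * (((b * m : ℕ) : ℝ) - 1))) *
        ∑ p ∈ (univ : Finset (Fin b × Fin m)).offDiag,
          ⟪w p.1.1 p.1.2, w p.2.1 p.2.2⟫ ^ 2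
      ≤ (((b * m : ℕ) : ℝ) - (m : ℝ) + 1) / (((m : ℝ) - 1) * (((b * m : ℕ) : ℝ) - 1))
    ∧ (1 / (((b * m : ℕ) : ℝ) * (((b * m : ℕ) : ℝ) - 1))) *
        ∑ p ∈ (univ : Finset (Fin b × Fin m)).offDiag,
          ⟪w p.1.1 p.1.2, w p.2.1 p.2.2⟫ ^ 2
        - (1 / (((b * m : ℕ) : ℝ) - 1)) ^ 2
      ≤ ((b * m : ℕ) : ℝ) * (((b * m : ℕ) : ℝ) - (m : ℝ)) /
          (((m : ℝ) - 1) * (((b * m : ℕ) : ℝ) - 1) ^ 2) := by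
  have hbR : (1:ℝ) ≤ b := by exact_mod_cast hb
  have hmR : (2:ℝ) ≤ m := by exact_mod_cast hm
  have hm1 : (0:ℝ) < (m:ℝ) - 1 := by linarith
  have hnR : ((b * m : ℕ) : ℝ) = (b:ℝ) * (m:ℝ) := by push_cast; ring
  have hn2 : (2:ℝ) ≤ ((b * m : ℕ) : ℝ) := by rw [hnR]; nlinarith
  have hn1 : (0:ℝ) < ((b * m : ℕ) : ℝ) - 1 := by linarith
  have hn0 : (0:ℝ) < ((b * m : ℕ) : ℝ) := by linarith
  -- bound the off-diagonal sum
  set Stot : ℝ := ∑ p ∈ (univ : Finset (Fin b × Fin m)).offDiag,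
      ⟪w p.1.1 p.1.2, w p.2.1 p.2.2⟫ ^ 2 with hStot
  have hsplit : Stot = (∑ p ∈ (univ : Finset (Fin b × Fin m)) ×ˢ (univ : Finset (Fin b × Fin m)),
        ⟪w p.1.1 p.1.2, w p.2.1 p.2.2⟫ ^ 2)
      - ∑ p : Fin b × Fin m, ⟪w p.1 p.2, w p.1 p.2⟫ ^ 2 := by
    rw [← Finset.diag_union_offDiag (univ : Finset (Fin b × Fin m)),
      Finset.sum_union (Finset.disjoint_diag_offDiag _), Finset.sum_diag]
    ring
  have hdiag : ∑ p : Fin b × Fin m, ⟪w p.1 p.2, w p.1 p.2⟫ ^ 2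
      = ((b * m : ℕ) : ℝ) := by
    have : ∀ p : Fin b × Fin m, ⟪w p.1 p.2, w p.1 p.2⟫ ^ 2 = 1 := by
      intro p
      rw [real_inner_self_eq_norm_sq, hw]; norm_num
    rw [Finset.sum_congr rfl fun p _ => this p]
    simp [Finset.card_univ]
  have hfull : ∑ p ∈ (univ : Finset (Fin b × Fin m)) ×ˢ (univ : Finset (Fin b × Fin m)),
        ⟪w p.1.1 p.1.2, w p.2.1 p.2.2⟫ ^ 2
      ≤ ((b * m : ℕ) : ℝ) * ((b:ℝ) * ((m:ℝ) / ((m:ℝ)-1))) := by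
    rw [Finset.sum_product]
    have hcard : (Finset.univ : Finset (Fin b × Fin m)).card = b * m := by simp
    calc ∑ p : Fin b × Fin m, ∑ q : Fin b × Fin m,
          ⟪w p.1 p.2, w q.1 q.2⟫ ^ 2
        ≤ ∑ _p : Fin b × Fin m, ((b:ℝ) * ((m:ℝ) / ((m:ℝ)-1))) := by
          refine Finset.sum_le_sum fun p _ => ?_
          have : ∑ q : Fin b × Fin m, ⟪w p.1 p.2, w q.1 q.2⟫ ^ 2
              = ∑ l : Fin b, ∑ j : Fin m, ⟪w p.1 p.2, w l j⟫ ^ 2 := by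
            rw [← Finset.sum_product']
            rfl
          rw [this]
          calc ∑ l : Fin b, ∑ j : Fin m, ⟪w p.1 p.2, w l j⟫ ^ 2
              ≤ ∑ _l : Fin b, ((m:ℝ) / ((m:ℝ)-1)) := by
                refine Finset.sum_le_sum fun l _ => ?_
                exact frame_bound hm (w l) (hw l) (hetf l) (w p.1 p.2) (hw p.1 p.2)
            _ = (b:ℝ) * ((m:ℝ) / ((m:ℝ)-1)) := by
                simp [Finset.card_univ, mul_comm]
      _ = ((b * m : ℕ) : ℝ) * ((b:ℝ) * ((m:ℝ) / ((m:ℝ)-1))) := by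
          simp [Finset.card_univ, hnR]
  have hStotle : Stot ≤ ((b * m : ℕ) : ℝ) *
      ((((b * m : ℕ) : ℝ) - (m:ℝ) + 1) / ((m:ℝ) - 1)) := by
    rw [hsplit, hdiag]
    have : ((b * m : ℕ) : ℝ) * ((b:ℝ) * ((m:ℝ) / ((m:ℝ)-1))) - ((b * m : ℕ) : ℝ)
        = ((b * m : ℕ) : ℝ) * ((((b * m : ℕ) : ℝ) - (m:ℝ) + 1) / ((m:ℝ) - 1)) := by
      rw [hnR]; field_simp; ring
    linarith [hfull]
  have first : (1 / (((b * m : ℕ) : ℝ) * (((b * m : ℕ) : ℝ) - 1))) * Stot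
      ≤ (((b * m : ℕ) : ℝ) - (m : ℝ) + 1) / (((m : ℝ) - 1) * (((b * m : ℕ) : ℝ) - 1)) := by
    have hpos : (0:ℝ) < 1 / (((b * m : ℕ) : ℝ) * (((b * m : ℕ) : ℝ) - 1)) := by positivity
    have h1 := mul_le_mul_of_nonneg_left hStotle hpos.le
    have heq : (1 / (((b * m : ℕ) : ℝ) * (((b * m : ℕ) : ℝ) - 1))) *
        (((b * m : ℕ) : ℝ) * ((((b * m : ℕ) : ℝ) - (m:ℝ) + 1) / ((m:ℝ) - 1)))
        = (((b * m : ℕ) : ℝ) - (m : ℝ) + 1) / (((m : ℝ) - 1) * (((b * m : ℕ) : ℝ) - 1)) := by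
      have key : ∀ x y : ℝ, x ≠ 0 → x - 1 ≠ 0 → y - 1 ≠ 0 →
          (1/(x*(x-1))) * (x * ((x - y + 1)/(y-1))) = (x - y + 1)/((y-1)*(x-1)) := by
        intro x y hx hx1 hy1
        field_simp
      exact key _ _ hn0.ne' hn1.ne' hm1.ne'
    linarith [heq ▸ h1]
  refine ⟨first, ?_⟩
  have heq2 : (((b * m : ℕ) : ℝ) - (m : ℝ) + 1) / (((m : ℝ) - 1) * (((b * m : ℕ) : ℝ) - 1))
      - (1 / (((b * m : ℕ) : ℝ) - 1)) ^ 2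
      = ((b * m : ℕ) : ℝ) * (((b * m : ℕ) : ℝ) - (m : ℝ)) /
          (((m : ℝ) - 1) * (((b * m : ℕ) : ℝ) - 1) ^ 2) := by
    have key2 : ∀ x y : ℝ, x - 1 ≠ 0 → y - 1 ≠ 0 →
        (x - y + 1)/((y-1)*(x-1)) - (1/(x-1))^2 = x*(x-y)/((y-1)*(x-1)^2) := by
      intro x y hx1 hy1
      field_simp
      ring
    exact key2 _ _ hn1.ne' hm1.ne'
  linarith [first, heq2]
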